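/- Let w ∈ ℂ_p[[t]] be a nonzero power series with bounded coefficients whose Newton polygon attains its minimal vertex y-coordinate, and let n_w be the minimal x-coordinate of a vertex of the Newton polygon attaining this minimum. Then the number of zeros of w in the open unit disk of ℂ_p, counted with multiplicity, equals n_w. -/

import Mathlib

set_option linter.unusedSectionVars false
set_option maxHeartbeats 1000000

open PowerSeries Finset Filter

namespace Stmt4Aux

variable {K : Type*} [NormedField K] [IsUltrametricDist K]

lemma nnnorm_coeff_mul_le (f g : PowerSeries K) (C D : NNReal)
    (hf : ∀ n, ‖coeff n f‖₊ ≤ C) (hg : ∀ n, ‖coeff n g‖₊ ≤ D) (n : ℕ) :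
    ‖coeff n (f * g)‖₊ ≤ C * D := by
  rw [PowerSeries.coeff_mul]
  apply IsUltrametricDist.nnnorm_sum_le_of_forall_le
  intro i _
  rw [nnnorm_mul]
  exact mul_le_mul' (hf _) (hg _)

lemma nn_sub_le_max (a b : K) : ‖a - b‖₊ ≤ max ‖a‖₊ ‖b‖₊ := by
  rw [sub_eq_add_neg]
  refine (IsUltrametricDist.nnnorm_add_le_max _ _).trans ?_
  rw [nnnorm_neg]

lemma nnnorm_one_sub_lt_one {x : K} (hx : ‖x‖₊ < 1) : ‖(1 : K) - x‖₊ = 1 := by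
  apply le_antisymm
  · refine (nn_sub_le_max _ _).trans ?_
    simp [hx.le]
  · by_contra hlt
    push_neg at hlt
    have h1 : ‖(1 : K)‖₊ ≤ max ‖(1 : K) - x‖₊ ‖x‖₊ := by
      simpa using IsUltrametricDist.nnnorm_add_le_max ((1 : K) - x) x
    rw [nnnorm_one] at h1
    rcases le_max_iff.mp h1 with h | h
    · exact absurd h (not_le.mpr hlt)
    · exact absurd h (not_le.mpr hx)

lemma coeff_inv_le_one (h : PowerSeries K)
    (hc : ‖constantCoeff h‖₊ = 1) (h1 : ∀ n, ‖coeff n h‖₊ ≤ 1) :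
    ∀ n, ‖coeff n h⁻¹‖₊ ≤ 1 := by
  intro n
  induction n using Nat.strong_induction_on with
  | _ n ih =>
    rw [PowerSeries.coeff_inv]
    split
    · rw [nnnorm_inv, hc]; norm_num
    · rw [nnnorm_mul, nnnorm_neg, nnnorm_inv, hc, inv_one, one_mul]
      apply IsUltrametricDist.nnnorm_sum_le_of_forall_le
      intro p hp
      split
      · rw [nnnorm_mul]
        have hlt : p.2 < n := by assumption
        exact mul_le_one' (h1 _) (ih _ hlt)
      · simp

variable [CompleteSpace K]

theorem weierstrass (v : ℕ → K) (nw : ℕ) (c : NNReal) (hc : c < 1)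
    (hv1 : ∀ n, ‖v n‖₊ ≤ 1) (hvnw : v nw = 1) (hvm : ∀ m, m < nw → ‖v m‖₊ ≤ c) :
    ∃ (P : Polynomial K) (u : PowerSeries K),
      P.Monic ∧ P.natDegree = nw ∧ (∀ j, j < nw → ‖P.coeff j‖₊ ≤ c) ∧
      (∀ n, ‖coeff n u‖₊ ≤ 1) ∧
      (∃ uinv : PowerSeries K, (∀ n, ‖coeff n uinv‖₊ ≤ 1) ∧ u * uinv = 1) ∧
      PowerSeries.mk v = (P : PowerSeries K) * u := by
  classical
  set F : PowerSeries K := PowerSeries.mk v with hF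
  set aP : PowerSeries K := PowerSeries.mk (fun n => if n < nw then v n else 0) with haP
  set hS : PowerSeries K := PowerSeries.mk (fun n => v (n + nw)) with hhS
  let Sh : PowerSeries K → PowerSeries K := fun x => PowerSeries.mk (fun n => coeff (n + nw) x)
  have Sh_coeff : ∀ (x : PowerSeries K) (n : ℕ), coeff n (Sh x) = coeff (n + nw) x :=
    fun x n => coeff_mk _ _
  have hS0 : constantCoeff hS = 1 := by
    rw [← PowerSeries.coeff_zero_eq_constantCoeff, hhS, coeff_mk, zero_add, hvnw]
  have hS0' : constantCoeff hS ≠ 0 := by rw [hS0]; exact one_ne_zero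
  have hSb : ∀ n, ‖coeff n hS‖₊ ≤ 1 := fun n => by
    rw [hhS, coeff_mk]; exact hv1 (n + nw)
  have hSinvb : ∀ n, ‖coeff n hS⁻¹‖₊ ≤ 1 :=
    coeff_inv_le_one hS (by rw [hS0, nnnorm_one]) hSb
  have haPb : ∀ n, ‖coeff n aP‖₊ ≤ c := by
    intro n
    rw [haP, coeff_mk]
    split
    · exact hvm n (by assumption)
    · simp
  have hFb : ∀ n, ‖coeff n F‖₊ ≤ 1 := fun n => by rw [hF, coeff_mk]; exact hv1 n
  have hdec : F = aP + (PowerSeries.X : PowerSeries K) ^ nw * hS := by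
    ext n
    rw [map_add, hF, coeff_mk, haP, coeff_mk, PowerSeries.coeff_X_pow_mul']
    by_cases hn : n < nw
    · rw [if_pos hn, if_neg (by omega), add_zero]
    · rw [if_neg hn, if_pos (by omega), hhS, coeff_mk, Nat.sub_add_cancel (by omega), zero_add]
  have Sh_add : ∀ x y : PowerSeries K, Sh (x + y) = Sh x + Sh y := by
    intro x y; ext n; rw [Sh_coeff, map_add, map_add, Sh_coeff, Sh_coeff]
  have Sh_Xpow : ∀ x : PowerSeries K, Sh ((PowerSeries.X : PowerSeries K) ^ nw * x) = x := by
    intro x; ext n; rw [Sh_coeff, PowerSeries.coeff_X_pow_mul]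
  have Sh_sub : ∀ x y : PowerSeries K, Sh (x - y) = Sh x - Sh y := by
    intro x y; ext n; rw [Sh_coeff, map_sub, map_sub, Sh_coeff, Sh_coeff]
  have Shb : ∀ (x : PowerSeries K) (D : NNReal), (∀ n, ‖coeff n x‖₊ ≤ D) →
      ∀ n, ‖coeff n (Sh x)‖₊ ≤ D := by
    intro x D hD n; rw [Sh_coeff]; exact hD _
  let T : PowerSeries K → PowerSeries K := fun x => hS⁻¹ * (1 - Sh (x * aP))
  let Q : ℕ → PowerSeries K := fun k => T^[k] 0
  have hQsucc : ∀ k, Q (k + 1) = T (Q k) := fun k => Function.iterate_succ_apply' T k 0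
  have hone : ∀ m, ‖coeff m (1 : PowerSeries K)‖₊ ≤ 1 := by
    intro m
    rw [PowerSeries.coeff_one]
    split <;> simp
  have hQb : ∀ k n, ‖coeff n (Q k)‖₊ ≤ 1 := by
    intro k
    induction k with
    | zero => intro n; simp [Q]
    | succ k ih =>
      intro n
      rw [hQsucc]
      have h2 : ∀ m, ‖coeff m (1 - Sh (Q k * aP))‖₊ ≤ 1 := by
        intro m
        rw [map_sub]
        refine (nn_sub_le_max _ _).trans (max_le (hone m) ?_)
        refine (Shb _ (1 * c) (nnnorm_coeff_mul_le _ _ 1 c ih haPb) m).trans ?_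
        rw [one_mul]; exact hc.le
      simpa using nnnorm_coeff_mul_le hS⁻¹ _ 1 1 hSinvb h2 n
  have hTdiff : ∀ (x y : PowerSeries K) (D : NNReal), (∀ n, ‖coeff n (x - y)‖₊ ≤ D) →
      ∀ n, ‖coeff n (T x - T y)‖₊ ≤ D * c := by
    intro x y D hD n
    have hxy : T x - T y = hS⁻¹ * Sh ((y - x) * aP) := by
      show hS⁻¹ * (1 - Sh (x * aP)) - hS⁻¹ * (1 - Sh (y * aP)) = _
      rw [← mul_sub, sub_sub_sub_cancel_left, ← Sh_sub, ← sub_mul]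
    rw [hxy]
    have hyx : ∀ m, ‖coeff m ((y - x) * aP)‖₊ ≤ D * c := by
      intro m
      refine nnnorm_coeff_mul_le _ _ D c (fun i => ?_) haPb m
      rw [show y - x = -(x - y) by ring, map_neg, nnnorm_neg]
      exact hD i
    simpa using nnnorm_coeff_mul_le hS⁻¹ _ 1 (D * c) hSinvb (Shb _ _ hyx) n
  have hQd : ∀ k n, ‖coeff n (Q (k + 1) - Q k)‖₊ ≤ c ^ k := by
    intro k
    induction k with
    | zero => intro n; simpa [Q] using hQb 1 n
    | succ k ih =>
      intro n
      have h1 : Q (k + 2) - Q (k + 1) = T (Q (k + 1)) - T (Q k) := by rw [hQsucc, hQsucc]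
      rw [h1, pow_succ]
      exact hTdiff _ _ _ ih n
  have hcauchy : ∀ n, ∃ Lx : K, Tendsto (fun k => coeff n (Q k)) atTop (nhds Lx) := by
    intro n
    refine cauchySeq_tendsto_of_complete ?_
    refine cauchySeq_of_le_geometric (c : ℝ) 1 hc (fun k => ?_)
    rw [dist_eq_norm, ← map_sub]
    calc ‖coeff n (Q k - Q (k + 1))‖ = ‖coeff n (Q (k + 1) - Q k)‖ := by
          rw [show Q k - Q (k+1) = -(Q (k+1) - Q k) by ring, map_neg, norm_neg]
      _ ≤ (c : ℝ) ^ k := by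
          have := hQd k n
          rw [← NNReal.coe_pow]
          exact this
      _ = 1 * (c : ℝ) ^ k := (one_mul _).symm
  choose L hL using hcauchy
  set q : PowerSeries K := PowerSeries.mk L with hq
  have hLq : ∀ n, Tendsto (fun k => coeff n (Q k)) atTop (nhds (coeff n q)) := by
    intro n; rw [hq, coeff_mk]; exact hL n
  have hqb : ∀ n, ‖coeff n q‖₊ ≤ 1 := fun n =>
    le_of_tendsto ((hLq n).nnnorm) (Filter.Eventually.of_forall fun k => hQb k n)
  have hfix : q = T q := by
    ext n
    have h1 : Tendsto (fun k => coeff n (Q (k + 1))) atTop (nhds (coeff n q)) :=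
      (hLq n).comp (tendsto_add_atTop_nat 1)
    have hexp : ∀ x : PowerSeries K, coeff n (T x) =
        ∑ p ∈ antidiagonal n, coeff p.1 hS⁻¹ *
          (coeff p.2 (1 : PowerSeries K) -
            ∑ s ∈ antidiagonal (p.2 + nw), coeff s.1 x * coeff s.2 aP) := by
      intro x
      show coeff n (hS⁻¹ * (1 - Sh (x * aP))) = _
      rw [PowerSeries.coeff_mul]
      refine Finset.sum_congr rfl fun p _ => ?_
      rw [map_sub, Sh_coeff, PowerSeries.coeff_mul]
    have h2 : Tendsto (fun k => coeff n (T (Q k))) atTop (nhds (coeff n (T q))) := by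
      simp only [hexp]
      apply tendsto_finset_sum
      intro p _
      apply Tendsto.const_mul
      apply Tendsto.const_sub
      apply tendsto_finset_sum
      intro s _
      exact (hLq s.1).mul_const _
    refine tendsto_nhds_unique h1 ?_
    have : (fun k => coeff n (Q (k + 1))) = fun k => coeff n (T (Q k)) := by
      funext k; rw [hQsucc]
    rw [this]
    exact h2
  have hSq : hS * q = 1 - Sh (q * aP) := by
    conv_lhs => rw [hfix]
    show hS * (hS⁻¹ * (1 - Sh (q * aP))) = _
    rw [← mul_assoc, PowerSeries.mul_inv_cancel hS hS0', one_mul]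
  have hShFq : Sh (F * q) = 1 := by
    have hsplit : F * q = aP * q + (PowerSeries.X : PowerSeries K) ^ nw * (hS * q) := by
      rw [hdec]; ring
    have haq : Sh (aP * q) = Sh (q * aP) := by rw [mul_comm]
    rw [hsplit, Sh_add, Sh_Xpow, hSq, haq]
    ring
  have hhigh : ∀ n, coeff (n + nw) (F * q) = if n = 0 then 1 else 0 := by
    intro n
    have h := congrArg (coeff n) hShFq
    rwa [Sh_coeff, PowerSeries.coeff_one] at h
  have hlow : ∀ j, j < nw → ‖coeff j (F * q)‖₊ ≤ c := by
    intro j hj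
    rw [PowerSeries.coeff_mul]
    apply IsUltrametricDist.nnnorm_sum_le_of_forall_le
    intro p hp
    have hp1 : p.1 < nw := by
      have := Finset.HasAntidiagonal.mem_antidiagonal.mp hp
      omega
    rw [nnnorm_mul]
    calc ‖coeff p.1 F‖₊ * ‖coeff p.2 q‖₊ ≤ c * 1 := by
          refine mul_le_mul' ?_ (hqb p.2)
          rw [hF, coeff_mk]
          exact hvm p.1 hp1
      _ = c := mul_one c
  have hq0 : ‖constantCoeff q‖₊ = 1 := by
    have h0 : constantCoeff q = 1 - coeff nw (q * aP) := by
      have h := congrArg (constantCoeff) hfix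
      rw [show constantCoeff (T q) = constantCoeff hS⁻¹ *
          constantCoeff (1 - Sh (q * aP)) from map_mul _ _ _] at h
      rw [PowerSeries.constantCoeff_inv, hS0, inv_one, one_mul, map_sub, map_one] at h
      rw [← PowerSeries.coeff_zero_eq_constantCoeff] at h ⊢
      rw [Sh_coeff, zero_add] at h
      exact h
    rw [h0]
    refine nnnorm_one_sub_lt_one (lt_of_le_of_lt ?_ hc)
    have := nnnorm_coeff_mul_le q aP 1 c hqb haPb nw
    rwa [one_mul] at this
  have hq0' : constantCoeff q ≠ 0 := by
    intro h
    rw [h] at hq0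
    simp at hq0
  have hqinvb : ∀ n, ‖coeff n q⁻¹‖₊ ≤ 1 := coeff_inv_le_one q hq0 hqb
  have hqq : q * q⁻¹ = 1 := PowerSeries.mul_inv_cancel q hq0'
  set P : Polynomial K := trunc (nw + 1) (F * q) with hP
  have hPco : ∀ j, P.coeff j = if j < nw + 1 then coeff j (F * q) else 0 := by
    intro j
    rw [hP, PowerSeries.coeff_trunc]
  have hPcoe : (P : PowerSeries K) = F * q := by
    ext n
    rw [Polynomial.coeff_coe, hPco]
    split
    · rfl
    · rename_i hn
      push_neg at hn
      rw [show n = (n - nw) + nw by omega, hhigh, if_neg (by omega)]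
  have hPnw : P.coeff nw = 1 := by
    rw [hPco, if_pos (by omega), show nw = 0 + nw by omega, hhigh, if_pos rfl]
  have hPdeg : P.natDegree ≤ nw := by
    have := natDegree_trunc_lt (F * q) nw
    rw [← hP] at this
    omega
  have hPmonic : P.Monic := Polynomial.monic_of_natDegree_le_of_coeff_eq_one nw hPdeg hPnw
  have hPdeg' : P.natDegree = nw :=
    le_antisymm hPdeg (Polynomial.le_natDegree_of_ne_zero (by rw [hPnw]; exact one_ne_zero))
  have hPlow : ∀ j, j < nw → ‖P.coeff j‖₊ ≤ c := by
    intro j hj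
    rw [hPco, if_pos (by omega)]
    exact hlow j hj
  refine ⟨P, q⁻¹, hPmonic, hPdeg', hPlow, hqinvb,
    ⟨q, hqb, PowerSeries.inv_mul_cancel q hq0'⟩, ?_⟩
  rw [hPcoe, mul_assoc, hqq, mul_one, hF]


lemma summable_norm_aux {x : PowerSeries K} {M : NNReal}
    (hx : ∀ n, ‖coeff n x‖₊ ≤ M) {z : K} (hz : ‖z‖ < 1) :
    Summable fun n => ‖coeff n x * z ^ n‖ := by
  refine Summable.of_nonneg_of_le (fun n => norm_nonneg _) (fun n => ?_)
    (((summable_geometric_of_lt_one (norm_nonneg z) hz)).mul_left (M : ℝ))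
  rw [norm_mul, norm_pow]
  have h : ‖coeff n x‖ ≤ (M : ℝ) := hx n
  exact mul_le_mul_of_nonneg_right h (by positivity)

lemma tsum_coeff_mul {x y : PowerSeries K} {M N : NNReal}
    (hx : ∀ n, ‖coeff n x‖₊ ≤ M) (hy : ∀ n, ‖coeff n y‖₊ ≤ N)
    {z : K} (hz : ‖z‖ < 1) :
    (∑' n, coeff n (x * y) * z ^ n) =
      (∑' n, coeff n x * z ^ n) * (∑' n, coeff n y * z ^ n) := by
  rw [tsum_mul_tsum_eq_tsum_sum_antidiagonal_of_summable_norm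
    (summable_norm_aux hx hz) (summable_norm_aux hy hz)]
  refine tsum_congr fun n => ?_
  rw [PowerSeries.coeff_mul, Finset.sum_mul]
  refine Finset.sum_congr rfl fun p hp => ?_
  have hpn : p.1 + p.2 = n := Finset.HasAntidiagonal.mem_antidiagonal.mp hp
  rw [← hpn, pow_add]
  ring

lemma tsum_coeff_poly (p : Polynomial K) (z : K) :
    (∑' n, coeff n (p : PowerSeries K) * z ^ n) = p.eval z := by
  rw [tsum_eq_sum (s := Finset.range (p.natDegree + 1)) ?_]
  · rw [Polynomial.eval_eq_sum_range]
    exact Finset.sum_congr rfl fun i _ => by rw [Polynomial.coeff_coe]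
  · intro n hn
    rw [Polynomial.coeff_coe, Polynomial.coeff_eq_zero_of_natDegree_lt, zero_mul]
    exact Nat.lt_of_not_le (fun h => hn (Finset.mem_range.mpr (Nat.lt_succ_of_le h)))

lemma continuousOn_tsum_coeff {x : PowerSeries K} {M : NNReal}
    (hx : ∀ n, ‖coeff n x‖₊ ≤ M) :
    ContinuousOn (fun z : K => ∑' n, coeff n x * z ^ n) {z : K | ‖z‖ < 1} := by
  refine continuousOn_of_forall_continuousAt fun z₀ hz₀ => ?_
  have hz₀' : ‖z₀‖ < 1 := hz₀
  set r : ℝ := (1 + ‖z₀‖) / 2 with hr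
  have hz₀r : ‖z₀‖ < r := by rw [hr]; linarith
  have hr1 : r < 1 := by rw [hr]; linarith
  have hr0 : 0 ≤ r := le_trans (norm_nonneg z₀) hz₀r.le
  have hsopen : IsOpen {z : K | ‖z‖ < r} := isOpen_lt continuous_norm continuous_const
  refine ContinuousOn.continuousAt ?_ (hsopen.mem_nhds hz₀r)
  refine continuousOn_tsum (u := fun n => (M : ℝ) * r ^ n)
    (fun n => (Continuous.mul continuous_const (continuous_pow n)).continuousOn) ?_ ?_
  · exact ((summable_geometric_of_lt_one hr0 hr1)).mul_left (M : ℝ)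
  · intro n z hzr
    rw [norm_mul, norm_pow]
    exact mul_le_mul (hx n) (pow_le_pow_left₀ (norm_nonneg z) (le_of_lt hzr) n)
      (by positivity) M.coe_nonneg

end Stmt4Aux

open Stmt4Aux PowerSeries Finset Filter in
/-- Let `K` be a complete algebraically closed nonarchimedean normed field (e.g. `ℂ_p`), and
let `w = ∑ w_n t^n` be a nonzero power series with bounded coefficients whose Newton polygon
attains its minimal vertex `y`-coordinate; concretely, let `n_w` be the least index at which
the maximal coefficient norm (equivalently, minimal valuation) is attained.  Then `w` has
exactly `n_w` zeros, counted with multiplicity, in the open unit disk: there is a multiset of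
`n_w` points of the open unit disk and a continuous nonvanishing function `u` on the disk with
`w(z) = ∏ (z − a) · u(z)` there. -/
theorem stmt_4 {K : Type*} [NormedField K] [IsUltrametricDist K] [CompleteSpace K]
    [IsAlgClosed K]
    (w : ℕ → K) (B : ℝ) (hB : ∀ n, ‖w n‖ ≤ B)
    (nw : ℕ) (hne : w nw ≠ 0)
    (hattain : ∀ n, ‖w n‖ ≤ ‖w nw‖) (hmin : ∀ m < nw, ‖w m‖ < ‖w nw‖) :
    ∃ (zs : Multiset K) (u : K → K),
      Multiset.card zs = nw ∧ (∀ z ∈ zs, ‖z‖ < 1) ∧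
      ContinuousOn u {z : K | ‖z‖ < 1} ∧ (∀ z : K, ‖z‖ < 1 → u z ≠ 0) ∧
      ∀ z : K, ‖z‖ < 1 →
        (∑' n, w n * z ^ n) = (zs.map fun a => z - a).prod * u z := by
  classical
  have hwnw : (0:ℝ) < ‖w nw‖ := norm_pos_iff.mpr hne
  set v : ℕ → K := fun n => (w nw)⁻¹ * w n with hv
  have hvr : ∀ n, ‖v n‖ = ‖w n‖ / ‖w nw‖ := by
    intro n; rw [hv]; simp only [norm_mul, norm_inv]; rw [inv_mul_eq_div]
  have hv1 : ∀ n, ‖v n‖₊ ≤ 1 := by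
    intro n
    have h : ‖v n‖ ≤ 1 := by rw [hvr, div_le_one hwnw]; exact hattain n
    rwa [← coe_nnnorm, ← NNReal.coe_one, NNReal.coe_le_coe] at h
  have hvnw : v nw = 1 := inv_mul_cancel₀ hne
  set c : NNReal := (Finset.range nw).sup (fun m => ‖v m‖₊) with hcdef
  have hvm : ∀ m, m < nw → ‖v m‖₊ ≤ c := fun m hm =>
    Finset.le_sup (f := fun m => ‖v m‖₊) (Finset.mem_range.mpr hm)
  have hc : c < 1 := by
    rw [hcdef]
    refine Finset.sup_lt_iff (by norm_num) |>.mpr fun m hm => ?_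
    have hm' := hmin m (Finset.mem_range.mp hm)
    have h : ‖v m‖ < 1 := by rw [hvr, div_lt_one hwnw]; exact hm'
    rwa [← coe_nnnorm, ← NNReal.coe_one, NNReal.coe_lt_coe] at h
  obtain ⟨P, u, hPm, hPd, hPlow, hub, ⟨uinv, huinvb, huu⟩, hfact⟩ :=
    weierstrass v nw c hc hv1 hvnw hvm
  have hsplits : P.Splits := IsAlgClosed.splits P
  have hcard : Multiset.card P.roots = nw := by
    rw [← hPd]; exact Polynomial.splits_iff_card_roots.mp hsplits
  have hPnw1 : P.coeff nw = 1 := by rw [← hPd]; exact hPm.coeff_natDegree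
  have hroots : ∀ z ∈ P.roots, ‖z‖ < 1 := by
    intro α hα
    have hr : P.eval α = 0 := (Polynomial.mem_roots'.mp hα).2
    by_contra hge
    push_neg at hge
    have hα1 : (1:NNReal) ≤ ‖α‖₊ := by
      rwa [← NNReal.coe_le_coe, NNReal.coe_one, coe_nnnorm]
    have hev : P.eval α = ∑ j ∈ range (nw + 1), P.coeff j * α ^ j :=
      Polynomial.eval_eq_sum_range' (by omega) α
    rw [Finset.sum_range_succ, hPnw1, one_mul] at hev
    have h2 : α ^ nw = -∑ j ∈ range nw, P.coeff j * α ^ j := by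
      rw [hev] at hr
      linear_combination hr
    have hnorm : ‖α‖₊ ^ nw ≤ c * ‖α‖₊ ^ nw := by
      calc ‖α‖₊ ^ nw = ‖α ^ nw‖₊ := (nnnorm_pow _ _).symm
        _ = ‖∑ j ∈ range nw, P.coeff j * α ^ j‖₊ := by rw [h2, nnnorm_neg]
        _ ≤ c * ‖α‖₊ ^ nw := by
            apply IsUltrametricDist.nnnorm_sum_le_of_forall_le
            intro j hj
            have hj' : j < nw := Finset.mem_range.mp hj
            rw [nnnorm_mul, nnnorm_pow]
            exact mul_le_mul' (hPlow j hj') (pow_le_pow_right₀ hα1 hj'.le)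
    have hpos : (0:NNReal) < ‖α‖₊ ^ nw := pow_pos (lt_of_lt_of_le one_pos hα1) nw
    have hlt : c * ‖α‖₊ ^ nw < ‖α‖₊ ^ nw := by
      calc c * ‖α‖₊ ^ nw < 1 * ‖α‖₊ ^ nw := mul_lt_mul_of_pos_right hc hpos
        _ = ‖α‖₊ ^ nw := one_mul _
    exact absurd hnorm (not_le.mpr hlt)
  have hPb : ∀ n, ‖coeff n (P : PowerSeries K)‖₊ ≤ 1 := by
    intro n
    rw [Polynomial.coeff_coe]
    rcases lt_trichotomy n nw with h | h | h
    · exact (hPlow n h).trans hc.le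
    · rw [h, hPnw1]; simp
    · rw [Polynomial.coeff_eq_zero_of_natDegree_lt (by omega)]; simp
  have hPfact := hsplits.eq_prod_roots_of_monic hPm
  refine ⟨P.roots, fun z => w nw * ∑' n, coeff n u * z ^ n, hcard, hroots, ?_, ?_, ?_⟩
  · exact continuousOn_const.mul (continuousOn_tsum_coeff hub)
  · intro z hz
    have hprod : (∑' n, coeff n u * z ^ n) * (∑' n, coeff n uinv * z ^ n) = 1 := by
      rw [← tsum_coeff_mul hub huinvb hz, huu, ← Polynomial.coe_one, tsum_coeff_poly,
        Polynomial.eval_one]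
    refine mul_ne_zero hne (fun h0 => ?_)
    rw [h0, zero_mul] at hprod
    exact zero_ne_one hprod
  · intro z hz
    have hPeval : P.eval z = (Multiset.map (fun a => z - a) P.roots).prod := by
      conv_lhs => rw [hPfact]
      rw [Polynomial.eval_multiset_prod, Multiset.map_map]
      congr 1
      refine Multiset.map_congr rfl fun a _ => ?_
      simp
    have hw : ∀ n, w n * z ^ n = w nw * (v n * z ^ n) := by
      intro n
      rw [hv]
      simp only
      rw [← mul_assoc, ← mul_assoc, mul_inv_cancel₀ hne, one_mul]
    calc (∑' n, w n * z ^ n) = ∑' n, w nw * (v n * z ^ n) := tsum_congr hw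
      _ = w nw * ∑' n, v n * z ^ n := tsum_mul_left
      _ = w nw * ∑' n, coeff n (PowerSeries.mk v) * z ^ n := by
          congr 1; exact tsum_congr fun n => by rw [coeff_mk]
      _ = w nw * ∑' n, coeff n ((P : PowerSeries K) * u) * z ^ n := by rw [← hfact]
      _ = w nw * (P.eval z * ∑' n, coeff n u * z ^ n) := by
          rw [tsum_coeff_mul hPb hub hz, tsum_coeff_poly]
      _ = (Multiset.map (fun a => z - a) P.roots).prod *
            (w nw * ∑' n, coeff n u * z ^ n) := by rw [hPeval]; ring
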